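/- If (i,j) is an overlapping consecutive occurrence of a string S in T (so p := j - i < |S|), then the prefix X = T[i..i+p) of T of length p starting at i is primitive. -/

import Mathlib

/-- `S` occurs in `T` at (0-indexed) position `i`. -/
def occursAt {α : Type*} (T S : List α) (i : ℕ) : Prop :=
  (T.drop i).take S.length = S

/-- `V` is primitive: it is not a proper power. -/
def Primitive {α : Type*} (V : List α) : Prop :=
  ∀ (U : List α) (d : ℕ), 0 < d → V = (List.replicate d U).flatten → d = 1

/-- `p` is a period of `F`. -/
def IsPeriod {α : Type*} (F : List α) (p : ℕ) : Prop :=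
  1 ≤ p ∧ ∀ k, k + p < F.length → F[k]? = F[k + p]?

/-- `p` is the smallest period of `F`. -/
def MinPeriod {α : Type*} (F : List α) (p : ℕ) : Prop :=
  IsPeriod F p ∧ ∀ q, IsPeriod F q → p ≤ q

/-- `(a,b,p)` is a run in `T` (0-indexed, positions `a..b` inclusive). -/
def IsRun {α : Type*} (T : List α) (a b p : ℕ) : Prop :=
  a ≤ b ∧ b < T.length ∧
  MinPeriod ((T.drop a).take (b - a + 1)) p ∧
  2 * p ≤ b - a + 1 ∧
  (a = 0 ∨ T[a - 1]? ≠ T[a - 1 + p]?) ∧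
  (b + 1 = T.length ∨ T[b + 1]? ≠ T[b + 1 - p]?)

/-- `(i,j)` is a consecutive occurrence of `S` in `T`. -/
def ConsOcc {α : Type*} (T S : List α) (i j : ℕ) : Prop :=
  i < j ∧ occursAt T S i ∧ occursAt T S j ∧ ∀ k, i < k → k < j → ¬ occursAt T S k

/-- Overlapping consecutive occurrences of `S` in `T`. -/
def OvOcc {α : Type*} (T S : List α) : Set (ℕ × ℕ) :=
  {q | ConsOcc T S q.1 q.2 ∧ q.2 < q.1 + S.length}

/-- Non-overlapping consecutive occurrences of `S` in `T`. -/
def NovOcc {α : Type*} (T S : List α) : Set (ℕ × ℕ) :=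
  {q | ConsOcc T S q.1 q.2 ∧ q.1 + S.length ≤ q.2}

/-- Positions of `T` covered by occurrences of `S`. -/
def Covered {α : Type*} (T S : List α) : Set ℕ :=
  {k | ∃ i, occursAt T S i ∧ i ≤ k ∧ k < i + S.length}

/-- Number of positions of `T` covered by occurrences of `S`. -/
noncomputable def Cov {α : Type*} (T S : List α) : ℕ := (Covered T S).ncard

/-- Number of occurrences of `S` in `T`. -/
noncomputable def Occ {α : Type*} (T S : List α) : ℕ := {i | occursAt T S i}.ncard

/-- One plus the number of non-overlapping consecutive occurrences. -/
noncomputable def nov {α : Type*} (T S : List α) : ℕ := 1 + (NovOcc T S).ncard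

/-- `S` is right-branching in `T` (end of text acts as a special end marker `none`). -/
def RightBranching {α : Type*} (T S : List α) : Prop :=
  ∃ i j, occursAt T S i ∧ occursAt T S j ∧ T[i + S.length]? ≠ T[j + S.length]?


lemma rep_get {α : Type*} (U : List α) : ∀ (d r : ℕ),
    r < ((List.replicate d U).flatten).length →
    ((List.replicate d U).flatten)[r]? = U[r % U.length]? := by
  intro d
  induction d with
  | zero => intro r hr; simp at hr
  | succ d ih =>
    intro r hr
    rw [List.replicate_succ, List.flatten_cons] at hr ⊢
    rcases Nat.lt_or_ge r U.length with h | h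
    · rw [List.getElem?_append_left h, Nat.mod_eq_of_lt h]
    · rw [List.getElem?_append_right h]
      rw [ih (r - U.length) (by simp at hr ⊢; omega)]
      congr 1
      exact (Nat.mod_eq_sub_mod h).symm


theorem stmt11 {α : Type*} (T S : List α) (i j : ℕ)
    (hcons : ConsOcc T S i j) (hov : j < i + S.length) :
    Primitive ((T.drop i).take (j - i)) := by
  obtain ⟨hij, hi, hj, hmin⟩ := hcons
  intro U d hd hX
  by_contra hd1
  have hd2 : 2 ≤ d := by omega
  set L := S.length with hL
  set p := j - i with hpdef
  set u := U.length with hu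
  have hpj : j = i + p := by omega
  have hp : 0 < p := by omega
  have hpL : p < L := by omega
  -- lengths
  have hjL : j + L ≤ T.length := by
    have := congrArg List.length hj
    simp only [List.length_take, List.length_drop] at this
    omega
  have hiT : ∀ t, t < L → T[i + t]? = S[t]? := by
    intro t ht
    conv_rhs => rw [← hi]
    rw [List.getElem?_take, if_pos ht, List.getElem?_drop]
  have hjT : ∀ t, t < L → T[j + t]? = S[t]? := by
    intro t ht
    conv_rhs => rw [← hj]
    rw [List.getElem?_take, if_pos ht, List.getElem?_drop]
  -- flatten length
  have hflat : ((List.replicate d U).flatten).length = d * u := by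
    simp [List.length_flatten, List.map_replicate, List.sum_replicate, smul_eq_mul, hu]
  have hXlen : p = d * u := by
    have h0 := congrArg List.length hX
    simp only [List.length_take, List.length_drop, hflat] at h0
    rw [Nat.min_eq_left (by omega)] at h0
    exact h0
  obtain ⟨e, he⟩ : ∃ e, d = e + 1 := ⟨d - 1, by omega⟩
  have he1 : 1 ≤ e := by omega
  have hw : p = u * e + u := by rw [hXlen, he]; ring
  have hupos : 0 < u := by
    rcases Nat.eq_zero_or_pos u with h | h
    · rw [h] at hw; simp at hw; omega
    · exact h
  have hup : u < p := by
    have h1 : u ≤ u * e := Nat.le_mul_of_pos_right u he1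
    omega
  have hdvd : u ∣ p := ⟨e + 1, by rw [hw]; ring⟩
  -- period p of S
  have hper : ∀ t, t + p < L → S[t]? = S[t + p]? := by
    intro t ht
    rw [← hiT (t + p) ht, ← hjT t (by omega)]
    congr 1; omega
  -- reduction mod p
  have hmod : ∀ t, t < L → S[t]? = S[t % p]? := by
    intro t
    induction t using Nat.strong_induction_on with
    | _ t ih =>
      intro ht
      rcases Nat.lt_or_ge t p with h | h
      · rw [Nat.mod_eq_of_lt h]
      · have h1 : S[t - p]? = S[t]? := by
          have := hper (t - p) (by omega)
          rwa [Nat.sub_add_cancel h] at this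
        rw [← h1, ih (t - p) (by omega) (by omega)]
        congr 1
        exact (Nat.mod_eq_sub_mod h).symm
  -- S values from U
  have e1 : ∀ r, r < p → S[r]? = U[r % u]? := by
    intro r hr
    have h1 : ((T.drop i).take p)[r]? = S[r]? := by
      rw [List.getElem?_take, if_pos hr, List.getElem?_drop]
      exact hiT r (by omega)
    rw [← h1, hX, rep_get U d r (by omega)]
  have e2 : ∀ t, t < L → S[t]? = U[t % u]? := by
    intro t ht
    rw [hmod t ht, e1 _ (Nat.mod_lt _ hp), Nat.mod_mod_of_dvd _ hdvd]
  -- period u of S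
  have hperu : ∀ t, t + u < L → S[t]? = S[t + u]? := by
    intro t ht
    rw [e2 t (by omega), e2 (t + u) ht, Nat.add_mod_right]
  -- occurrence at i + u
  have hocc : occursAt T S (i + u) := by
    unfold occursAt
    apply List.ext_getElem?
    intro n
    rw [List.getElem?_take, List.getElem?_drop]
    rcases Nat.lt_or_ge n S.length with hn | hn
    · rw [if_pos hn]
      rcases Nat.lt_or_ge (u + n) L with h2 | h2
      · rw [show i + u + n = i + (u + n) from by omega, hiT _ h2]
        rw [Nat.add_comm u n]
        exact (hperu n (by omega)).symm
      · have h3 : u + n - p < L := by omega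
        rw [show i + u + n = j + (u + n - p) from by omega, hjT _ h3]
        rw [e2 _ h3, e2 n hn]
        congr 1
        conv_rhs => rw [show n = (u + n - p) + u * e from by omega]
        rw [Nat.add_mul_mod_self_left]
    · rw [if_neg (by omega)]
      exact (List.getElem?_eq_none hn).symm
  exact hmin (i + u) (by omega) (by omega) hocc
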